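/- arXiv:1801.00517 — 2 statements merged into one kernel-verified Lean document; each statement's English description precedes it below -/
import Mathlib

section
/- Let a, b be coprime integers with b > 0, and write S(a,b) = k/q in lowest terms with q > 0. Then q = b / gcd(b, a²+1). -/
open Finset

/-- The sawtooth function on rationals. -/
def saw (x : ℚ) : ℚ := if x.den = 1 then 0 else Int.fract x - 1/2

lemma den_one_iff_int (x : ℚ) : x.den = 1 ↔ ∃ z : ℤ, x = (z:ℚ) := by
  rw [Rat.den_eq_one_iff]
  constructor
  · intro h; exact ⟨x.num, h.symm⟩
  · rintro ⟨z, rfl⟩; simp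

lemma saw_frac {r b : ℤ} (h0 : 0 < r) (h1 : r < b) : saw ((r:ℚ)/b) = (r:ℚ)/b - 1/2 := by
  have hb : (0:ℚ) < b := by exact_mod_cast h0.trans h1
  have hx0 : (0:ℚ) < (r:ℚ)/b := by positivity
  have hx1 : (r:ℚ)/b < 1 := by
    rw [div_lt_one hb]; exact_mod_cast h1
  have hfr : Int.fract ((r:ℚ)/b) = (r:ℚ)/b := Int.fract_eq_self.2 ⟨le_of_lt hx0, hx1⟩
  rw [saw]
  split_ifs with h
  · exfalso
    obtain ⟨z, hz⟩ := (den_one_iff_int _).1 h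
    rw [hz] at hx0 hx1
    have h0' : 0 < z := by exact_mod_cast hx0
    have h1' : z < 1 := by exact_mod_cast hx1
    omega
  · rw [hfr]

lemma saw_shift (m : ℤ) (x : ℚ) : saw ((m:ℚ) + x) = saw x := by
  have hden : ((m:ℚ) + x).den = 1 ↔ x.den = 1 := by
    rw [den_one_iff_int, den_one_iff_int]
    constructor
    · rintro ⟨z, hz⟩; exact ⟨z - m, by push_cast; linarith⟩
    · rintro ⟨z, rfl⟩; exact ⟨m + z, by push_cast; ring⟩
  rw [saw, saw, Int.fract_intCast_add]
  by_cases h : x.den = 1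
  · rw [if_pos h, if_pos (hden.2 h)]
  · rw [if_neg h, if_neg (fun hh => h (hden.1 hh))]

lemma sum_Icc_id (n : ℕ) : ∑ k ∈ Icc 1 n, (k:ℚ) = n*(n+1)/2 := by
  induction n with
  | zero => simp
  | succ n ih =>
    rw [Finset.sum_Icc_succ_top (by omega : 1 ≤ n+1), ih]
    push_cast; ring

lemma sum_Icc_sq (n : ℕ) : ∑ k ∈ Icc 1 n, (k:ℚ)^2 = n*(n+1)*(2*n+1)/6 := by
  induction n with
  | zero => simp
  | succ n ih =>
    rw [Finset.sum_Icc_succ_top (by omega : 1 ≤ n+1), ih]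
    push_cast; ring

lemma sum_perm (a b : ℤ) (hb : 0 < b) (hab : IsCoprime a b) (F : ℤ → ℚ) :
    ∑ k ∈ Icc 1 (b.toNat - 1), F ((a*k) % b) = ∑ k ∈ Icc 1 (b.toNat - 1), F (k:ℤ) := by
  have hbt : (b.toNat : ℤ) = b := Int.toNat_of_nonneg hb.le
  obtain ⟨c, v, huv⟩ := hab
  obtain ⟨t, ht⟩ : b ∣ c * a - 1 := ⟨-v, by linarith⟩
  have hcb : IsCoprime c b := ⟨a, -t, by linarith⟩
  have hrange : ∀ (x : ℤ), IsCoprime x b → ∀ k ∈ Icc 1 (b.toNat - 1),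
      ((x*k) % b).toNat ∈ Icc 1 (b.toNat - 1) := by
    intro x hx k hk
    simp only [mem_Icc] at hk ⊢
    obtain ⟨hka, hkb⟩ := hk
    have hk1 : (1:ℤ) ≤ k := by exact_mod_cast hka
    have hk2 : (k:ℤ) ≤ b - 1 := by omega
    have h0 : 0 ≤ x*k % b := Int.emod_nonneg _ (by omega)
    have h1 : x*k % b < b := Int.emod_lt_of_pos _ hb
    have hne : x*k % b ≠ 0 := by
      intro h
      have hdvd : b ∣ x * k := Int.dvd_of_emod_eq_zero h
      have : b ∣ (k:ℤ) := (hx.symm).dvd_of_dvd_mul_left hdvd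
      have := Int.le_of_dvd (by omega) this
      omega
    omega
  have hinv : ∀ (x y : ℤ), x * y % b = 1 % b → ∀ k ∈ Icc 1 (b.toNat - 1),
      ((x * (((y*k) % b).toNat : ℤ)) % b).toNat = k := by
    intro x y hxy k hk
    simp only [mem_Icc] at hk
    obtain ⟨hka, hkb⟩ := hk
    have hk1 : (1:ℤ) ≤ k := by exact_mod_cast hka
    have hk2 : (k:ℤ) ≤ b - 1 := by omega
    have hnn : (0:ℤ) ≤ (y*k) % b := Int.emod_nonneg _ (by omega)
    rw [Int.toNat_of_nonneg hnn]
    have : x * ((y*k) % b) % b = (k:ℤ) % b := by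
      rw [Int.mul_emod, Int.emod_emod_of_dvd _ dvd_rfl, ← Int.mul_emod, ← mul_assoc,
        Int.mul_emod, hxy, ← Int.mul_emod, one_mul]
    rw [this, Int.emod_eq_of_lt (by omega) (by omega)]
    omega
  have hca' : c * a % b = 1 % b := by
    rw [show c*a = 1 + b*t by linarith, Int.add_mul_emod_self_left]
  have hac' : a * c % b = 1 % b := by rw [mul_comm]; exact hca'
  refine Finset.sum_nbij' (fun k => ((a*k) % b).toNat) (fun k => ((c*k) % b).toNat)
    (hrange a ⟨c, v, by linarith⟩) (hrange c hcb) (hinv c a hca') (hinv a c hac') ?_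
  intro k hk
  congr 1
  exact (Int.toNat_of_nonneg (Int.emod_nonneg _ (by omega))).symm

lemma int_gcd_add_mul (b x c : ℤ) : Int.gcd b (x + b*c) = Int.gcd b x := by
  apply Nat.dvd_antisymm
  · have h1 : (Int.gcd b (x + b*c) : ℤ) ∣ b := Int.gcd_dvd_left _ _
    have h2 : (Int.gcd b (x + b*c) : ℤ) ∣ x + b*c := Int.gcd_dvd_right _ _
    have h3 : (Int.gcd b (x + b*c) : ℤ) ∣ x := by
      have := h2.sub (h1.mul_right c)
      simpa using this
    exact Int.natCast_dvd_natCast.mp (Int.dvd_coe_gcd h1 h3)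
  · have h1 : (Int.gcd b x : ℤ) ∣ b := Int.gcd_dvd_left _ _
    have h2 : (Int.gcd b x : ℤ) ∣ x := Int.gcd_dvd_right _ _
    have h3 : (Int.gcd b x : ℤ) ∣ x + b*c := h2.add (h1.mul_right c)
    exact Int.natCast_dvd_natCast.mp (Int.dvd_coe_gcd h1 h3)

/-- The normalized Dedekind sum `S(a,b) = 12 s(a,b)`. -/
def S (a b : ℤ) : ℚ :=
  12 * ∑ k ∈ Finset.Icc 1 b.toNat, saw ((k : ℚ) / (b : ℚ)) * saw (((a : ℚ) * k) / (b : ℚ))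

theorem stmt2 (a b k q : ℤ) (hb : 0 < b) (hab : IsCoprime a b) (hq : 0 < q)
    (hkq : IsCoprime k q) (hS : S a b = (k : ℚ) / q) :
    q = b / (Int.gcd b (a ^ 2 + 1) : ℤ) := by
  have hbt : (b.toNat : ℤ) = b := Int.toNat_of_nonneg hb.le
  have hn1 : 1 ≤ b.toNat := by omega
  have hbQ : (b:ℚ) ≠ 0 := by exact_mod_cast hb.ne'
  set n := b.toNat with hn
  -- the residues and quotients
  set M : ℤ := ∑ j ∈ Icc 1 (n-1), (j:ℤ) * ((a*j)/b) with hM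
  set P : ℤ := ∑ j ∈ Icc 1 (n-1), ((a*j)/b)^2 with hP
  -- basic facts about residues
  have hres : ∀ j : ℕ, j ∈ Icc 1 (n-1) → 0 < (a*j) % b ∧ (a*j) % b < b := by
    intro j hj
    simp only [mem_Icc] at hj
    have hj1 : (1:ℤ) ≤ (j:ℤ) := by exact_mod_cast hj.1
    have hj2 : (j:ℤ) ≤ b - 1 := by
      have := hj.2; omega
    have h0 : 0 ≤ (a*j) % b := Int.emod_nonneg _ (by omega)
    have h1 : (a*j) % b < b := Int.emod_lt_of_pos _ hb
    have hne : (a*j) % b ≠ 0 := by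
      intro h
      have hdvd : b ∣ a * j := Int.dvd_of_emod_eq_zero h
      have : b ∣ (j:ℤ) := (hab.symm).dvd_of_dvd_mul_left hdvd
      have := Int.le_of_dvd (by omega) this
      omega
    exact ⟨by omega, h1⟩
  -- term-by-term expansion
  have hterm : ∀ j ∈ Icc 1 (n-1), saw ((j : ℚ) / (b : ℚ)) * saw (((a : ℚ) * j) / (b : ℚ))
      = ((j:ℚ) * (((a*j)%b : ℤ):ℚ))/(b:ℚ)^2 - (j:ℚ)/(2*b) - (((a*j)%b : ℤ):ℚ)/(2*b) + 1/4 := by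
    intro j hj
    obtain ⟨hr0, hr1⟩ := hres j hj
    simp only [mem_Icc] at hj
    have hj1 : (1:ℤ) ≤ (j:ℤ) := by exact_mod_cast hj.1
    have hj2 : (j:ℤ) ≤ b - 1 := by have := hj.2; omega
    have hs1 : saw ((j : ℚ) / (b : ℚ)) = (j:ℚ)/b - 1/2 := by
      have := saw_frac (show (0:ℤ) < (j:ℤ) by omega) (show (j:ℤ) < b by omega)
      push_cast at this ⊢
      exact this
    have hid : a * (j:ℤ) = b * ((a*j)/b) + (a*j) % b := (Int.mul_ediv_add_emod _ _).symm
    have hidQ : (a:ℚ) * (j:ℚ) = (b:ℚ) * (((a*j)/b : ℤ):ℚ) + (((a*j)%b : ℤ):ℚ) := by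
      exact_mod_cast hid
    have hs2 : saw (((a : ℚ) * j) / (b : ℚ)) = (((a*j)%b : ℤ):ℚ)/b - 1/2 := by
      have heq : ((a : ℚ) * j) / (b : ℚ) = ((((a*j)/b : ℤ)):ℚ) + (((a*j)%b : ℤ):ℚ)/b := by
        field_simp
        linarith [hidQ]
      rw [heq, saw_shift, saw_frac hr0 hr1]
    rw [hs1, hs2]; ring
  -- split off the top term of the sum
  have hsplit : S a b = 12 * ∑ j ∈ Icc 1 (n-1),
      saw ((j : ℚ) / (b : ℚ)) * saw (((a : ℚ) * j) / (b : ℚ)) := by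
    rw [S]
    have hn' : b.toNat = (n - 1) + 1 := by omega
    rw [hn', Finset.sum_Icc_succ_top (by omega : 1 ≤ (n-1)+1)]
    have hcast : (((n - 1 + 1 : ℕ)):ℚ) = (b:ℚ) := by
      have : ((n - 1 + 1 : ℕ):ℤ) = b := by omega
      exact_mod_cast this
    have h1 : saw ((((n - 1 + 1 : ℕ)):ℚ) / (b:ℚ)) = 0 := by
      rw [hcast, div_self hbQ]
      simp [saw]
    rw [h1, zero_mul, add_zero]
  -- known sums
  have hB1 : ((n-1 : ℕ):ℚ) = (b:ℚ) - 1 := by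
    have : ((n - 1 : ℕ):ℤ) = b - 1 := by omega
    exact_mod_cast this
  have hSk : ∑ j ∈ Icc 1 (n-1), (j:ℚ) = ((b:ℚ)-1)*b/2 := by
    rw [sum_Icc_id, hB1]; ring
  have hSk2 : ∑ j ∈ Icc 1 (n-1), (j:ℚ)^2 = ((b:ℚ)-1)*b*(2*b-1)/6 := by
    rw [sum_Icc_sq, hB1]; ring
  have hSr : ∑ j ∈ Icc 1 (n-1), (((a*j)%b : ℤ):ℚ) = ((b:ℚ)-1)*b/2 := by
    have h := sum_perm a b hb hab (fun x => (x:ℚ))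
    rw [← hn] at h
    rw [h, ← hSk]
    push_cast
    rfl
  have hSr2 : ∑ j ∈ Icc 1 (n-1), (((a*j)%b : ℤ):ℚ)^2 = ((b:ℚ)-1)*b*(2*b-1)/6 := by
    have h := sum_perm a b hb hab (fun x => (x:ℚ)^2)
    rw [← hn] at h
    rw [h, ← hSk2]
    push_cast
    rfl
  have hMQ : ((M:ℤ):ℚ) = ∑ j ∈ Icc 1 (n-1), (j:ℚ) * (((a*j)/b : ℤ):ℚ) := by
    rw [hM]; push_cast; rfl
  have hPQ : ((P:ℤ):ℚ) = ∑ j ∈ Icc 1 (n-1), (((a*j)/b : ℤ):ℚ)^2 := by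
    rw [hP]; push_cast; rfl
  -- pointwise r = a j - b m
  have hrm : ∀ j ∈ Icc 1 (n-1), (((a*j)%b : ℤ):ℚ) = (a:ℚ)*(j:ℚ) - (b:ℚ)*(((a*j)/b : ℤ):ℚ) := by
    intro j _
    have hid : a * (j:ℤ) = b * ((a*j)/b) + (a*j) % b := (Int.mul_ediv_add_emod _ _).symm
    have h2 : ((a * (j:ℤ) :ℤ):ℚ) = ((b * ((a*j)/b) + (a*j) % b :ℤ):ℚ) := by exact_mod_cast hid
    push_cast at h2
    linarith
  -- sum of j * r j
  have hSkr : ∑ j ∈ Icc 1 (n-1), (j:ℚ) * (((a*j)%b : ℤ):ℚ)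
      = (a:ℚ) * (((b:ℚ)-1)*b*(2*b-1)/6) - (b:ℚ) * (M:ℚ) := by
    have h1 : ∑ j ∈ Icc 1 (n-1), (j:ℚ) * (((a*j)%b : ℤ):ℚ)
        = ∑ j ∈ Icc 1 (n-1), ((a:ℚ)*(j:ℚ)^2 - (b:ℚ)*((j:ℚ) * (((a*j)/b : ℤ):ℚ))) := by
      refine Finset.sum_congr rfl ?_
      intro j hj
      rw [hrm j hj]; ring
    rw [h1, Finset.sum_sub_distrib, ← Finset.mul_sum, ← Finset.mul_sum, hSk2, hMQ]
  -- sum of r^2 gives key relation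
  have hkey : (a:ℚ)^2 * (((b:ℚ)-1)*b*(2*b-1)/6) - 2*(a:ℚ)*(b:ℚ)*(M:ℚ) + (b:ℚ)^2*(P:ℚ)
      = ((b:ℚ)-1)*b*(2*b-1)/6 := by
    have h1 : ∑ j ∈ Icc 1 (n-1), (((a*j)%b : ℤ):ℚ)^2
        = ∑ j ∈ Icc 1 (n-1), ((a:ℚ)^2*(j:ℚ)^2 - 2*(a:ℚ)*(b:ℚ)*((j:ℚ)*(((a*j)/b : ℤ):ℚ))
            + (b:ℚ)^2*((((a*j)/b : ℤ):ℚ)^2)) := by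
      refine Finset.sum_congr rfl ?_
      intro j hj
      rw [hrm j hj]; ring
    have h2 : ∑ j ∈ Icc 1 (n-1), ((a:ℚ)^2*(j:ℚ)^2 - 2*(a:ℚ)*(b:ℚ)*((j:ℚ)*(((a*j)/b : ℤ):ℚ))
            + (b:ℚ)^2*((((a*j)/b : ℤ):ℚ)^2))
        = (a:ℚ)^2 * (∑ j ∈ Icc 1 (n-1), (j:ℚ)^2) - 2*(a:ℚ)*(b:ℚ)*(M:ℚ) + (b:ℚ)^2*(P:ℚ) := by
      rw [Finset.sum_add_distrib, Finset.sum_sub_distrib, ← Finset.mul_sum, ← Finset.mul_sum,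
        ← Finset.mul_sum, ← hMQ, ← hPQ]
    rw [hSk2] at h2
    linarith [h1, h2, hSr2]
  -- E2 : the integer relation for M
  have hE2 : 12*a*M = (a^2-1)*(b-1)*(2*b-1) + 6*b*P := by
    have hQ : (b:ℚ) * ((12*a*M : ℤ):ℚ) = (b:ℚ) * (((a^2-1)*(b-1)*(2*b-1) + 6*b*P : ℤ):ℚ) := by
      push_cast
      linear_combination (-6:ℚ) * hkey
    have := mul_left_cancel₀ hbQ hQ
    exact_mod_cast this
  -- E1 : S a b = N / b
  set N : ℤ := 2*a*(b-1)*(2*b-1) - 12*M - 3*b*(b-1) with hN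
  have hSN : S a b = (N:ℚ)/(b:ℚ) := by
    rw [hsplit, Finset.sum_congr rfl hterm]
    rw [Finset.sum_add_distrib, Finset.sum_sub_distrib, Finset.sum_sub_distrib,
      Finset.sum_const, ← Finset.sum_div, ← Finset.sum_div, ← Finset.sum_div,
      hSkr, hSk, hSr]
    have hcard : (Icc 1 (n-1)).card = n - 1 := by rw [Nat.card_Icc]; omega
    rw [hcard, nsmul_eq_mul, hB1, hN]
    push_cast
    field_simp
    ring
  -- N has the right gcd with b
  have hstep : a * N = (a^2+1) + b * ((a^2+1)*(2*b-3) - 3*a*(b-1) - 6*P) := by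
    rw [hN]; linear_combination -hE2
  have hg1 : Int.gcd b (a*N) = Int.gcd b (a^2+1) := by
    rw [hstep]
    exact int_gcd_add_mul b (a^2+1) _
  have hcop_ab : Nat.Coprime a.natAbs b.natAbs := Int.isCoprime_iff_gcd_eq_one.mp hab
  have hg2 : Int.gcd b (a*N) = Int.gcd b N := by
    unfold Int.gcd
    rw [Int.natAbs_mul]
    exact Nat.Coprime.gcd_mul_left_cancel_right _ hcop_ab
  have hgcd : Int.gcd b N = Int.gcd b (a^2+1) := by rw [← hg2, hg1]
  -- now the denominator argument
  set g : ℤ := (Int.gcd b N : ℤ) with hg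
  have hgnat : Int.gcd b N ≠ 0 := by
    intro h
    rw [Int.gcd_eq_zero_iff] at h
    omega
  have hg0 : 0 < g := by rw [hg]; exact_mod_cast Nat.pos_of_ne_zero hgnat
  have hgb : g ∣ b := Int.gcd_dvd_left _ _
  have hgN : g ∣ N := Int.gcd_dvd_right _ _
  have hbb : g * (b / g) = b := Int.mul_ediv_cancel' hgb
  have hNN : g * (N / g) = N := Int.mul_ediv_cancel' hgN
  have hcop' : IsCoprime (b / g) (N / g) := by
    rw [Int.isCoprime_iff_gcd_eq_one]
    exact Int.gcd_div_gcd_div_gcd (Nat.pos_of_ne_zero hgnat)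
  have hqQ : (q:ℚ) ≠ 0 := by exact_mod_cast hq.ne'
  have hkb : k * b = N * q := by
    have h1 : (k:ℚ)/q = (N:ℚ)/b := by rw [← hS, hSN]
    have h2 : (k:ℚ) * b = (N:ℚ) * q := by
      field_simp at h1
      linarith [h1]
    exact_mod_cast h2
  have hkb' : k * (b / g) = (N / g) * q := by
    apply mul_left_cancel₀ hg0.ne'
    calc g * (k * (b/g)) = k * (g * (b/g)) := by ring
    _ = k * b := by rw [hbb]
    _ = N * q := hkb
    _ = (g * (N/g)) * q := by rw [hNN]
    _ = g * ((N/g) * q) := by ring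
  have hqd : q ∣ b / g := by
    refine (hkq.symm).dvd_of_dvd_mul_left ?_
    exact ⟨N/g, by linarith [hkb']⟩
  have hdq : b / g ∣ q := by
    refine hcop'.dvd_of_dvd_mul_left ?_
    exact ⟨k, by linarith [hkb']⟩
  have hbg0 : 0 < b / g := by
    rcases lt_trichotomy (b / g) 0 with h | h | h
    · nlinarith [hbb]
    · rw [h, mul_zero] at hbb; omega
    · exact h
  have hqb : q = b / g := Int.dvd_antisymm hq.le hbg0.le hqd hdq
  rw [hqb, hg, hgcd]
end

section
/- Let a, b, q be integers with b, q > 0 and gcd(a,b) = 1. Then S(a,b) = k/q for some integer k with gcd(k,q) = 1 if and only if b = q(a²+1)/t for some positive integer t with gcd(t,q) = 1 (and t dividing a²+1). -/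
open Finset

lemma saw_eq (x : ℚ) : saw x = if Int.fract x = 0 then 0 else Int.fract x - 1/2 := by
  unfold saw
  by_cases h : x.den = 1
  · rw [if_pos h, if_pos]
    rw [Rat.den_eq_one_iff] at h
    rw [← h, Int.fract_intCast]
  · rw [if_neg h, if_neg]
    intro h0
    apply h
    have hx : x = (⌊x⌋ : ℚ) := by
      have : x - ⌊x⌋ = 0 := h0
      linarith
    rw [hx, Rat.den_intCast]

lemma saw_of_mem (x : ℚ) (h0 : 0 < x) (h1 : x < 1) : saw x = x - 1/2 := by
  rw [saw_eq, Int.fract_eq_self.mpr ⟨le_of_lt h0, h1⟩, if_neg (ne_of_gt h0)]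

lemma emod_pos_of (c b k : ℤ) (hb : 0 < b) (hcb : IsCoprime c b) (h1 : 0 < k) (h2 : k < b) :
    0 < (c * k) % b := by
  rcases lt_or_eq_of_le (Int.emod_nonneg (c * k) hb.ne') with h | h
  · exact h
  · exfalso
    have hdvd : b ∣ c * k := Int.dvd_of_emod_eq_zero h.symm
    have : b ∣ k := (hcb.symm).dvd_of_dvd_mul_left hdvd
    have := Int.le_of_dvd h1 this
    omega

lemma S_eq (a b : ℤ) (hb : 0 < b) (hab : IsCoprime a b) :
    S a b = 12 * ∑ k ∈ Icc 1 (b.toNat - 1),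
      ((k : ℚ) / b - 1/2) * (((a * (k : ℤ) % b : ℤ) : ℚ) / b - 1/2) := by
  unfold S
  have hnb : (b.toNat : ℤ) = b := Int.toNat_of_nonneg hb.le
  have hn1 : 1 ≤ b.toNat := by omega
  have hbQ : (0 : ℚ) < (b : ℚ) := by exact_mod_cast hb
  congr 1
  have hsplit : Icc 1 b.toNat = Icc 1 ((b.toNat - 1) + 1) := by
    rw [(by omega : b.toNat - 1 + 1 = b.toNat)]
  rw [hsplit, Finset.sum_Icc_succ_top (by omega : 1 ≤ b.toNat - 1 + 1)]
  have htop : saw ((((b.toNat - 1 + 1 : ℕ)) : ℚ) / b) * saw ((a : ℚ) * ((b.toNat - 1 + 1 : ℕ) : ℚ) / b) = 0 := by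
    have h1 : (((b.toNat - 1 + 1 : ℕ)) : ℚ) = (b : ℚ) := by
      rw [show b.toNat - 1 + 1 = b.toNat by omega]
      exact_mod_cast congrArg (Int.cast : ℤ → ℚ) hnb
    rw [h1, div_self hbQ.ne']
    have : saw 1 = 0 := by
      rw [saw_eq]
      norm_num [Int.fract_one]
    rw [this, zero_mul]
  rw [htop, add_zero]
  apply Finset.sum_congr rfl
  intro k hk
  rw [mem_Icc] at hk
  have hk1 : 0 < (k : ℤ) := by omega
  have hk2 : (k : ℤ) < b := by omega
  have hkQ1 : (0 : ℚ) < (k : ℚ) / b := div_pos (by exact_mod_cast hk1) hbQ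
  have hkQ2 : (k : ℚ) / b < 1 := (div_lt_one hbQ).mpr (by exact_mod_cast hk2)
  rw [saw_of_mem _ hkQ1 hkQ2]
  congr 1
  -- second factor
  set r : ℤ := a * (k : ℤ) % b with hr
  set qq : ℤ := a * (k : ℤ) / b with hq
  have hi : a * (k : ℤ) = b * qq + r := (Int.mul_ediv_add_emod _ _).symm
  have hiQ : (a : ℚ) * (k : ℚ) = (b : ℚ) * (qq : ℚ) + (r : ℚ) := by exact_mod_cast congrArg (Int.cast : ℤ → ℚ) hi
  have hdm : (a : ℚ) * (k : ℚ) / b = (qq : ℚ) + (r : ℚ) / b := by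
    field_simp
    linarith [hiQ]
  have hr0 : 0 < r := emod_pos_of a b k hb hab hk1 hk2
  have hrb : r < b := Int.emod_lt_of_pos _ hb
  have hrQ1 : (0 : ℚ) < (r : ℚ) / b := div_pos (by exact_mod_cast hr0) hbQ
  have hrQ2 : (r : ℚ) / b < 1 := (div_lt_one hbQ).mpr (by exact_mod_cast hrb)
  rw [hdm, saw_eq, Int.fract_intCast_add, Int.fract_eq_self.mpr ⟨hrQ1.le, hrQ2⟩,
    if_neg (ne_of_gt hrQ1)]

lemma mem_helper (c b : ℤ) (hb : 0 < b) (hcb : IsCoprime c b) (k : ℕ)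
    (hk : k ∈ Icc 1 (b.toNat - 1)) : ((c * k) % b).toNat ∈ Icc 1 (b.toNat - 1) := by
  rw [mem_Icc] at hk ⊢
  have h1 : 0 < (k : ℤ) := by omega
  have h2 : (k : ℤ) < b := by omega
  have hp := emod_pos_of c b k hb hcb h1 h2
  have hlt := Int.emod_lt_of_pos (c * k) hb
  omega

lemma perm_sum (a b : ℤ) (hb : 0 < b) (hab : IsCoprime a b) (f : ℤ → ℤ) :
    ∑ k ∈ Icc 1 (b.toNat - 1), f ((a * k) % b) = ∑ k ∈ Icc 1 (b.toNat - 1), f k := by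
  obtain ⟨u, v, huv⟩ := hab
  have hub : IsCoprime u b := ⟨a, v, by linarith [huv]⟩
  have hab' : IsCoprime a b := ⟨u, v, by linarith [huv]⟩
  have round : ∀ (c d : ℤ), c * d ≡ 1 [ZMOD b] → ∀ k ∈ Icc 1 (b.toNat - 1),
      ((d * ↑(((c * k) % b).toNat)) % b).toNat = k := by
    intro c d hcd k hk
    rw [mem_Icc] at hk
    have h1 : 0 < (k : ℤ) := by omega
    have h2 : (k : ℤ) < b := by omega
    have hnn : 0 ≤ (c * k) % b := Int.emod_nonneg _ hb.ne'
    rw [Int.toNat_of_nonneg hnn]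
    have e1 : ((c * k) % b) ≡ c * k [ZMOD b] := Int.emod_emod_of_dvd _ dvd_rfl
    have e2 : d * ((c * k) % b) ≡ (c * d) * k [ZMOD b] := by
      have := e1.mul_left d
      calc d * ((c * k) % b) ≡ d * (c * k) [ZMOD b] := this
        _ = (c * d) * k := by ring
    have e3 : d * ((c * k) % b) ≡ 1 * k [ZMOD b] := e2.trans (hcd.mul_right k)
    have : (d * ((c * k) % b)) % b = (1 * (k : ℤ)) % b := e3
    rw [one_mul, Int.emod_eq_of_lt h1.le h2] at this
    rw [this]
    omega
  have hcd : a * u ≡ 1 [ZMOD b] := Int.ModEq.symm (Int.modEq_iff_dvd.mpr ⟨-v, by linarith [huv]⟩)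
  have hcd' : u * a ≡ 1 [ZMOD b] := by rwa [mul_comm] at hcd
  refine Finset.sum_nbij' (i := fun k => ((a * k) % b).toNat)
    (j := fun k => ((u * k) % b).toNat)
    (fun k hk => mem_helper a b hb hab' k hk)
    (fun k hk => mem_helper u b hb hub k hk)
    (fun k hk => round a u hcd k hk)
    (fun k hk => round u a hcd' k hk)
    (fun k hk => ?_)
  congr 1
  rw [Int.toNat_of_nonneg (Int.emod_nonneg _ hb.ne')]

lemma sum_Icc_eq_range (n : ℕ) (hn : 1 ≤ n) (f : ℕ → ℤ) (hf : f 0 = 0) :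
    ∑ k ∈ Icc 1 (n - 1), f k = ∑ k ∈ range n, f k := by
  rw [← Finset.Ico_add_one_right_eq_Icc, (by omega : n - 1 + 1 = n), range_eq_Ico,
    Finset.sum_eq_sum_Ico_succ_bot (by omega : 0 < n), hf, zero_add]

lemma gauss1 (n : ℕ) : 2 * ∑ k ∈ range n, (k : ℤ) = n * (n - 1) := by
  induction n with
  | zero => simp
  | succ m ih => rw [Finset.sum_range_succ]; push_cast; push_cast at ih; ring_nf; ring_nf at ih; linarith

lemma gauss2 (n : ℕ) : 6 * ∑ k ∈ range n, (k : ℤ)^2 = n * (n - 1) * (2 * n - 1) := by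
  induction n with
  | zero => simp
  | succ m ih => rw [Finset.sum_range_succ]; push_cast; push_cast at ih; ring_nf; ring_nf at ih; linarith

lemma key (a b : ℤ) (hb : 0 < b) (hab : IsCoprime a b) :
    ∃ m : ℤ, S a b = (m : ℚ) / b ∧ b ∣ (m * a - (a ^ 2 + 1)) := by
  have hnb : (b.toNat : ℤ) = b := Int.toNat_of_nonneg hb.le
  have hn1 : 1 ≤ b.toNat := by omega
  have hbQ : (0 : ℚ) < (b : ℚ) := by exact_mod_cast hb
  set n := b.toNat with hn
  set s := Icc 1 (n - 1) with hs
  set P : ℤ := ∑ k ∈ s, (k : ℤ) * (a * (k : ℤ) % b) with hP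
  set K1 : ℤ := ∑ k ∈ s, (k : ℤ) with hK1
  set K2 : ℤ := ∑ k ∈ s, (k : ℤ)^2 with hK2
  set QK : ℤ := ∑ k ∈ s, (k : ℤ) * (a * (k : ℤ) / b) with hQK
  set Q2 : ℤ := ∑ k ∈ s, (a * (k : ℤ) / b)^2 with hQ2
  -- Gauss facts
  have hg1 : 2 * K1 = b * (b - 1) := by
    rw [hK1, hs, sum_Icc_eq_range n hn1 _ (by simp), gauss1 n, hnb]
  have hg2 : 6 * K2 = b * (b - 1) * (2 * b - 1) := by
    rw [hK2, hs, sum_Icc_eq_range n hn1 _ (by simp), gauss2 n, hnb]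
  -- permutation facts
  have hperm1 : ∑ k ∈ s, (a * (k : ℤ) % b) = K1 := perm_sum a b hb hab (fun x => x)
  have hperm2 : ∑ k ∈ s, (a * (k : ℤ) % b)^2 = K2 := perm_sum a b hb hab (fun x => x^2)
  -- step 2 : S = (12P - 3b²(b-1)) / b²
  have hcard : (s.card : ℤ) = b - 1 := by
    rw [hs, Nat.card_Icc]
    omega
  have hQstep : S a b = ((12 * P - 3 * b^2 * (b - 1) : ℤ) : ℚ) / (b : ℚ)^2 := by
    rw [S_eq a b hb hab]
    have expand : ∀ k ∈ s, ((k : ℚ) / b - 1/2) * (((a * (k : ℤ) % b : ℤ) : ℚ) / b - 1/2)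
        = ((12 * ((k : ℤ) * (a * (k : ℤ) % b)) - 6 * b * (k : ℤ) - 6 * b * (a * (k : ℤ) % b) + 3 * b^2 : ℤ) : ℚ) / (12 * (b : ℚ)^2) := by
      intro k _
      push_cast
      field_simp
      ring
    rw [Finset.sum_congr rfl expand, ← Finset.sum_div, ← Int.cast_sum]
    have hsum : ∑ k ∈ s, (12 * ((k : ℤ) * (a * (k : ℤ) % b)) - 6 * b * (k : ℤ) - 6 * b * (a * (k : ℤ) % b) + 3 * b^2)
        = 12 * P - 3 * b^2 * (b - 1) := by
      rw [Finset.sum_add_distrib, Finset.sum_sub_distrib, Finset.sum_sub_distrib,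
        ← Finset.mul_sum, ← Finset.mul_sum, ← Finset.mul_sum, Finset.sum_const, nsmul_eq_mul]
      rw [hperm1, ← hP, ← hK1, hcard]
      linear_combination -6 * b * hg1
    rw [hsum]
    field_simp
  -- step 3 : algebraic identities
  have hr_def : ∀ k : ℕ, a * (k : ℤ) % b = a * (k : ℤ) - b * (a * (k : ℤ) / b) := by
    intro k
    rw [Int.emod_def]
  have hA : P = a * K2 - b * QK := by
    calc P = ∑ k ∈ s, (a * (k : ℤ)^2 - b * ((k : ℤ) * (a * (k : ℤ) / b))) := by
          apply Finset.sum_congr rfl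
          intro k _
          rw [hr_def k]; ring
      _ = a * K2 - b * QK := by
          rw [Finset.sum_sub_distrib, ← Finset.mul_sum, ← Finset.mul_sum]
  have hB : a^2 * K2 - 2 * a * b * QK + b^2 * Q2 = K2 := by
    calc a^2 * K2 - 2 * a * b * QK + b^2 * Q2
        = ∑ k ∈ s, (a^2 * (k : ℤ)^2 - 2 * a * b * ((k : ℤ) * (a * (k : ℤ) / b)) + b^2 * (a * (k : ℤ) / b)^2) := by
          rw [Finset.sum_add_distrib, Finset.sum_sub_distrib, ← Finset.mul_sum, ← Finset.mul_sum, ← Finset.mul_sum]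
      _ = ∑ k ∈ s, (a * (k : ℤ) % b)^2 := by
          apply Finset.sum_congr rfl
          intro k _
          rw [hr_def k]; ring
      _ = K2 := hperm2
  have h2aP : 2 * a * P = (a^2 + 1) * K2 - b^2 * Q2 := by linear_combination 2 * a * hA + hB
  set W : ℤ := (a^2 + 1) * ((b - 1) * (2 * b - 1)) - 6 * b * Q2 with hW
  have h12 : 12 * a * P = b * W := by
    rw [hW]
    linear_combination 6 * h2aP + (a^2 + 1) * hg2
  have hdvd12 : b ∣ 12 * P := by
    apply (hab.symm).dvd_of_dvd_mul_left
    exact ⟨W, by linear_combination h12⟩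
  obtain ⟨c, hc⟩ := hdvd12
  refine ⟨c - 3 * b * (b - 1), ?_, ?_⟩
  · rw [hQstep]
    have hbm : 12 * P - 3 * b^2 * (b - 1) = b * (c - 3 * b * (b - 1)) := by linear_combination hc
    rw [hbm]
    push_cast
    field_simp
  · have hac : a * c = W := by
      apply mul_left_cancel₀ hb.ne'
      linear_combination h12 - a * hc
    exact ⟨(a^2 + 1) * (2 * b - 3) - 6 * Q2 - 3 * a * (b - 1), by linear_combination hac⟩


theorem stmt3 (a b q : ℤ) (hb : 0 < b) (hq : 0 < q) (hab : IsCoprime a b) :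
    (∃ k : ℤ, IsCoprime k q ∧ S a b = (k : ℚ) / q) ↔
      (∃ t : ℤ, 0 < t ∧ IsCoprime t q ∧ t ∣ a ^ 2 + 1 ∧ b * t = q * (a ^ 2 + 1)) := by
  obtain ⟨m, hSm, hcong⟩ := key a b hb hab
  have hbQ : (0 : ℚ) < (b : ℚ) := by exact_mod_cast hb
  have hqQ : (0 : ℚ) < (q : ℚ) := by exact_mod_cast hq
  constructor
  · rintro ⟨k, hkq, hSk⟩
    have h1 : (m : ℚ) / b = (k : ℚ) / q := by rw [← hSm, hSk]
    rw [div_eq_div_iff hbQ.ne' hqQ.ne'] at h1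
    have hmq : m * q = k * b := by exact_mod_cast h1
    have hqb : q ∣ b := by
      apply (hkq.symm).dvd_of_dvd_mul_left
      exact ⟨m, by linear_combination -hmq⟩
    obtain ⟨u, hu⟩ := hqb
    have hu0 : 0 < u := by nlinarith
    have hmk : m = k * u := by
      apply mul_right_cancel₀ hq.ne'
      linear_combination hmq + k * hu
    have h1u : u ∣ m * a - (a ^ 2 + 1) := dvd_trans ⟨q, by linear_combination hu⟩ hcong
    have h2u : u ∣ m * a := ⟨k * a, by linear_combination a * hmk⟩
    have huA : u ∣ a ^ 2 + 1 := by
      have h3 : a ^ 2 + 1 = m * a - (m * a - (a ^ 2 + 1)) := by ring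
      rw [h3]; exact dvd_sub h2u h1u
    obtain ⟨t, ht⟩ := huA
    have ht0 : 0 < t := by nlinarith [sq_nonneg a]
    obtain ⟨w, hw⟩ := hcong
    have hqkt : k * a - t = q * w := by
      apply mul_left_cancel₀ (ne_of_gt hu0)
      linear_combination hw - a * hmk + ht + w * hu
    have haq : IsCoprime a q := hab.of_isCoprime_of_dvd_right ⟨u, hu⟩
    have hka : IsCoprime (k * a) q := hkq.mul_left haq
    refine ⟨t, ht0, ?_, ⟨u, by linear_combination ht⟩, by linear_combination t * hu - q * ht⟩
    have hteq : t = k * a + q * (-w) := by linear_combination -hqkt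
    rw [hteq]
    exact hka.add_mul_left_left (-w)
  · rintro ⟨t, ht0, htq, htdvd, hbt⟩
    obtain ⟨u, hu⟩ := htdvd
    have hu0 : 0 < u := by nlinarith [sq_nonneg a]
    have hbqu : b = q * u := by
      apply mul_right_cancel₀ (ne_of_gt ht0)
      linear_combination hbt + q * hu
    have hau : IsCoprime a u := ⟨-a, t, by linear_combination -hu⟩
    have h1u : u ∣ m * a - (a ^ 2 + 1) := dvd_trans ⟨q, by linear_combination hbqu⟩ hcong
    have h2u : u ∣ m * a := by
      have h3 : m * a = (m * a - (a ^ 2 + 1)) + (a ^ 2 + 1) := by ring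
      rw [h3]; exact dvd_add h1u ⟨t, by linear_combination hu⟩
    have hum : u ∣ m := (hau.symm).dvd_of_dvd_mul_left (by rwa [mul_comm] at h2u)
    obtain ⟨k, hk⟩ := hum
    obtain ⟨w, hw⟩ := hcong
    have hkt : k * a - t = q * w := by
      apply mul_left_cancel₀ (ne_of_gt hu0)
      linear_combination hw - a * hk + hu + w * hbqu
    have hka : IsCoprime (k * a) q := by
      have h := htq.add_mul_left_left w
      rwa [show t + q * w = k * a by linear_combination -hkt] at h
    refine ⟨k, IsCoprime.of_mul_left_left hka, ?_⟩
    rw [hSm]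
    have hm' : (m : ℚ) = (u : ℚ) * k := by exact_mod_cast hk
    have hb' : (b : ℚ) = (u : ℚ) * q := by
      rw [hbqu]; push_cast; ring
    have huQ : ((u : ℤ) : ℚ) ≠ 0 := by
      have : (0 : ℚ) < (u : ℚ) := by exact_mod_cast hu0
      exact this.ne'
    rw [hm', hb', mul_div_mul_left _ _ huQ]
end
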